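/- Every perfectly normal Hausdorff space which is a continuous image of some compact linearly ordered topological space is a continuous image of some perfectly normal compact linearly ordered topological space. -/

import Mathlib

universe u

open Set Topology

/-- The character of a space `X` at a point `x`: the least cardinality of a
neighborhood base of `X` at `x`. -/
noncomputable def nhdsChar (X : Type u) [TopologicalSpace X] (x : X) : Cardinal.{u} :=
  sInf { c | ∃ B : Set (Set X), Cardinal.mk B = c ∧ (∀ U ∈ B, U ∈ nhds x) ∧
      ∀ V ∈ nhds x, ∃ U ∈ B, U ⊆ V }

/-- The character of a space: `χ(X) = sup_{x ∈ X} χ(x, X)`. -/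
noncomputable def spaceChar (X : Type u) [TopologicalSpace X] : Cardinal.{u} :=
  ⨆ x : X, nhdsChar X x

/-- The cellularity of a space: the supremum of cardinalities of pairwise disjoint
families of nonempty open subsets. -/
noncomputable def cellularity (X : Type u) [TopologicalSpace X] : Cardinal.{u} :=
  sSup { c | ∃ 𝒰 : Set (Set X), Cardinal.mk 𝒰 = c ∧ (∀ U ∈ 𝒰, IsOpen U ∧ U.Nonempty) ∧
      𝒰.PairwiseDisjoint id }

/-- The density of a space: the least cardinality of a dense subset. -/
noncomputable def density (X : Type u) [TopologicalSpace X] : Cardinal.{u} :=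
  sInf { c | ∃ D : Set X, Cardinal.mk D = c ∧ Dense D }

/-- The weight of a space: the least cardinality of a base for the topology. -/
noncomputable def weight (X : Type u) [TopologicalSpace X] : Cardinal.{u} :=
  sInf { c | ∃ B : Set (Set X), Cardinal.mk B = c ∧ TopologicalSpace.IsTopologicalBasis B }

/-- A surjective map is irreducible if no proper closed subset maps onto the codomain. -/
def IsIrreducibleMap {K : Type*} {X : Type*} [TopologicalSpace K] [TopologicalSpace X]
    (f : K → X) : Prop :=
  Function.Surjective f ∧ ∀ A : Set K, IsClosed A → A ≠ univ → f '' A ≠ univ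

/-- `C` is an order component of `A`: a maximal convex subset of `A`. -/
def IsOrderComponent {K : Type*} [LinearOrder K] (A C : Set K) : Prop :=
  C ⊆ A ∧ C.OrdConnected ∧ ∀ C' : Set K, C ⊆ C' → C' ⊆ A → C'.OrdConnected → C' = C

/-- A map from a linearly ordered set is order-light if every order component of every
fiber is a singleton. -/
def OrderLight {K : Type*} {X : Type*} [LinearOrder K] (f : K → X) : Prop :=
  ∀ x : X, ∀ C : Set K, IsOrderComponent (f ⁻¹' {x}) C → ∃ k, C = {k}

/-- The countable chain condition: every pairwise disjoint family of nonempty open sets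
is countable. -/
def CCC (X : Type*) [TopologicalSpace X] : Prop :=
  ∀ 𝒰 : Set (Set X), (∀ U ∈ 𝒰, IsOpen U ∧ U.Nonempty) → 𝒰.PairwiseDisjoint id → 𝒰.Countable

/-- A space is non-archimedean if it has a base any two members of which are either
disjoint or comparable by inclusion. -/
def NonArchimedean (X : Type*) [TopologicalSpace X] : Prop :=
  ∃ B : Set (Set X), TopologicalSpace.IsTopologicalBasis B ∧
    ∀ U ∈ B, ∀ V ∈ B, Disjoint U V ∨ U ⊆ V ∨ V ⊆ U

/-- A space is perfectly normal if it is normal and every closed set is a Gδ-set. -/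
def PerfNormal (X : Type*) [TopologicalSpace X] : Prop :=
  NormalSpace X ∧ ∀ A : Set X, IsClosed A → IsGδ A

/-- `X` is a continuous image of some compact linearly ordered topological space
(a linearly ordered set equipped with its order topology). -/
def ContinuousImageOfCompactLOTS (X : Type u) [TopologicalSpace X] : Prop :=
  ∃ (K : Type u) (lo : LinearOrder K) (tK : TopologicalSpace K),
    letI := lo; letI := tK;
    OrderTopology K ∧ CompactSpace K ∧ ∃ f : K → X, Continuous f ∧ Function.Surjective f

/-- A closed set `A` is a strong T-set: the boundary of each connected component of the
complement consists of exactly two points, and each such component is homeomorphic to the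
open unit interval `(0,1)`. -/
def IsStrongTSet {Y : Type*} [TopologicalSpace Y] (A : Set Y) : Prop :=
  IsClosed A ∧ ∀ x ∈ Aᶜ,
    (∃ a b : Y, a ≠ b ∧ frontier (connectedComponentIn Aᶜ x) = {a, b}) ∧
    Nonempty (↥(connectedComponentIn Aᶜ x) ≃ₜ ↥(Ioo (0:ℝ) 1))

/-- Souslin's Hypothesis: every ccc LOTS is separable. -/
def SouslinHypothesis : Prop :=
  ∀ (L : Type u) (lo : LinearOrder L) (tL : TopologicalSpace L),
    letI := lo; letI := tL;
    OrderTopology L → CCC L → TopologicalSpace.SeparableSpace L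

section Cofinal

open Cardinal Ordinal

variable {α : Type u} [LinearOrder α] [TopologicalSpace α] [OrderTopology α]

lemma CCC.exists_countable_cofinal (hccc : CCC α) (S : Set α) :
    ∃ D ⊆ S, D.Countable ∧ ∀ p ∈ S, ∃ d ∈ D, p ≤ d := by
  by_contra hcon
  push_neg at hcon
  have H : ∀ D : Set α, D.Countable → ∃ p ∈ S, ∀ d ∈ D ∩ S, d < p := by
    intro D hD
    obtain ⟨p, hpS, hp⟩ := hcon (D ∩ S) inter_subset_right (hD.mono inter_subset_left)
    exact ⟨p, hpS, fun d hd => hp d hd⟩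
  classical
  set g : Set α → α := fun D =>
    if h : D.Countable then (H D h).choose else (H ∅ countable_empty).choose with hg
  have hgS : ∀ D, g D ∈ S := by
    intro D
    by_cases h : D.Countable
    · simp only [hg, dif_pos h]
      exact (H D h).choose_spec.1
    · simp only [hg, dif_neg h]
      exact (H ∅ countable_empty).choose_spec.1
  have hglt : ∀ D, D.Countable → ∀ d ∈ D ∩ S, d < g D := by
    intro D hD d hd
    simp only [hg, dif_pos hD]
    exact (H D hD).choose_spec.2 d hd
  -- the uncountable well-order
  set W := (ℵ₁ : Cardinal.{u}).ord.ToType with hW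
  have hIio : ∀ w : W, (Set.Iio w).Countable := by
    intro w
    rw [countable_iff_lt_aleph_one]
    exact Cardinal.mk_Iio_ord_toType w
  -- recursion producing triples
  set body : ∀ w : W, (∀ v : W, v < w → α × α × α) → α × α × α := fun w ih =>
    let P : Set α := ⋃ v : Set.Iio w, ({(ih v.1 v.2).1, (ih v.1 v.2).2.1, (ih v.1 v.2).2.2} : Set α)
    (g P, g (insert (g P) P), g (insert (g (insert (g P) P)) (insert (g P) P))) with hbody
  set F : W → α × α × α := WellFounded.fix wellFounded_lt body with hF
  set P : W → Set α := fun w =>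
    ⋃ v : Set.Iio w, ({(F v.1).1, (F v.1).2.1, (F v.1).2.2} : Set α) with hP
  have hFeq : ∀ w, F w = (g (P w), g (insert (g (P w)) (P w)),
      g (insert (g (insert (g (P w)) (P w))) (insert (g (P w)) (P w)))) := by
    intro w
    rw [hF, WellFounded.fix_eq]
  have hPc : ∀ w, (P w).Countable := by
    intro w
    have : Countable (Set.Iio w) := (hIio w).to_subtype
    exact countable_iUnion fun v =>
      ((countable_singleton _).insert _).insert _
  have h3 : ∀ u : W, (F u).1 ∈ S ∧ (F u).2.1 ∈ S ∧ (F u).2.2 ∈ S := by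
    intro u
    rw [hFeq u]
    exact ⟨hgS _, hgS _, hgS _⟩
  have hPS : ∀ w, P w ⊆ S := by
    intro w a ha
    simp only [hP, mem_iUnion, mem_insert_iff, mem_singleton_iff] at ha
    obtain ⟨v, h | h | h⟩ := ha <;> subst h
    exacts [(h3 v).1, (h3 v).2.1, (h3 v).2.2]
  -- ordering facts
  have hxy : ∀ w : W, (F w).1 < (F w).2.1 := by
    intro w
    rw [hFeq w]
    exact hglt _ ((hPc w).insert _) _ ⟨mem_insert _ _, hgS _⟩
  have hyz : ∀ w : W, (F w).2.1 < (F w).2.2 := by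
    intro w
    rw [hFeq w]
    exact hglt _ (((hPc w).insert _).insert _) _ ⟨mem_insert _ _, hgS _⟩
  have hmono : ∀ v w : W, v < w → (F v).2.2 < (F w).1 := by
    intro v w hvw
    have hz : (F v).2.2 ∈ P w := by
      rw [hP]
      exact mem_iUnion.mpr ⟨⟨v, hvw⟩, mem_insert_iff.mpr (Or.inr (mem_insert_iff.mpr
        (Or.inr rfl)))⟩
    have := hglt (P w) (hPc w) _ ⟨hz, (hPS w) hz⟩
    rw [hFeq w]
    exact this
  set J : W → Set α := fun w => Ioo (F w).1 (F w).2.2 with hJ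
  have hJne : ∀ w, ((F w).2.1 : α) ∈ J w := fun w => ⟨hxy w, hyz w⟩
  have hJdisj : ∀ v w : W, v ≠ w → Disjoint (J v) (J w) := by
    intro v w hvw
    wlog h : v < w generalizing v w
    · exact (this w v hvw.symm ((hvw.lt_or_gt).resolve_left h)).symm
    rw [Set.disjoint_left]
    intro t ht ht'
    exact absurd (ht.2.trans ((hmono v w h).trans ht'.1)) (lt_irrefl t)
  have hJinj : Function.Injective J := by
    intro v w h
    by_contra hne
    have := hJdisj v w hne
    rw [h, disjoint_self] at this
    have := this ▸ hJne w
    exact this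
  have hcnt : (Set.range J).Countable := by
    apply hccc
    · rintro U ⟨w, rfl⟩
      exact ⟨isOpen_Ioo, ⟨_, hJne w⟩⟩
    · rintro U ⟨v, rfl⟩ V ⟨w, rfl⟩ hne
      exact hJdisj v w (fun h => hne (by rw [h]))
  have hWc : Countable W := by
    have h1 : Countable (Set.range J) := hcnt.to_subtype
    exact (Equiv.ofInjective J hJinj).countable_iff.mpr h1
  have : #W ≤ ℵ₀ := Cardinal.mk_le_aleph0
  rw [hW, Cardinal.mk_ord_toType] at this
  exact absurd this (not_le.mpr Cardinal.aleph0_lt_aleph_one)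


lemma CCC.orderDual (hccc : CCC α) : CCC αᵒᵈ := fun 𝒰 h1 h2 => hccc 𝒰 h1 h2

lemma CCC.exists_countable_coinitial (hccc : CCC α) (S : Set α) :
    ∃ E ⊆ S, E.Countable ∧ ∀ p ∈ S, ∃ e ∈ E, e ≤ p := by
  obtain ⟨E, hE1, hE2, hE3⟩ :=
    (hccc.orderDual).exists_countable_cofinal (S : Set αᵒᵈ)
  exact ⟨E, hE1, hE2, hE3⟩

omit [TopologicalSpace α] [OrderTopology α] in
/-- A union of ordConnected sets all containing a common point is ordConnected. -/
lemma ordConnected_sUnion_common {𝒱 : Set (Set α)} {p : α}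
    (h : ∀ V ∈ 𝒱, V.OrdConnected ∧ p ∈ V) : (⋃₀ 𝒱).OrdConnected := by
  constructor
  rintro x ⟨V1, hV1, hxV⟩ y ⟨V2, hV2, hyV⟩ z hz
  rcases le_total z p with hzp | hpz
  · exact ⟨V1, hV1, (h V1 hV1).1.out hxV (h V1 hV1).2 ⟨hz.1, hzp⟩⟩
  · exact ⟨V2, hV2, (h V2 hV2).1.out (h V2 hV2).2 hyV ⟨hpz, hz.2⟩⟩

omit [TopologicalSpace α] [OrderTopology α] in
lemma ordConnected_union_common {V W : Set α} {p : α} (hV : V.OrdConnected)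
    (hW : W.OrdConnected) (hpV : p ∈ V) (hpW : p ∈ W) : (V ∪ W).OrdConnected := by
  have := ordConnected_sUnion_common (𝒱 := {V, W}) (p := p) ?_
  · rwa [sUnion_pair] at this
  · rintro U (rfl | rfl)
    exacts [⟨hV, hpV⟩, ⟨hW, hpW⟩]

/-- every point of an open set has an ordConnected open neighborhood inside it -/
lemma exists_ordConnected_open_nbhd {U : Set α} (hU : IsOpen U) {q : α} (hq : q ∈ U) :
    ∃ V : Set α, IsOpen V ∧ V.OrdConnected ∧ q ∈ V ∧ V ⊆ U := by
  have hb := TopologicalSpace.isTopologicalBasis_of_subbasis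
    (OrderTopology.topology_eq_generate_intervals (α := α))
  obtain ⟨V, hV, hqV, hVU⟩ := hb.exists_subset_of_mem_open hq hU
  refine ⟨V, hb.isOpen hV, ?_, hqV, hVU⟩
  obtain ⟨F, ⟨-, hFsub⟩, rfl⟩ := hV
  refine Set.ordConnected_sInter fun s hs => ?_
  obtain ⟨a, h | h⟩ := hFsub hs <;> subst h
  exacts [ordConnected_Ioi, ordConnected_Iio]

/-- convex component of a point in a set -/
def ordComp (U : Set α) (p : α) : Set α :=
  ⋃₀ {V : Set α | V ⊆ U ∧ V.OrdConnected ∧ p ∈ V}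

omit [TopologicalSpace α] [OrderTopology α] in
lemma ordComp_subset (U : Set α) (p : α) : ordComp U p ⊆ U := by
  rintro x ⟨V, hV, hxV⟩
  exact hV.1 hxV

omit [TopologicalSpace α] [OrderTopology α] in
lemma mem_ordComp_self {U : Set α} {p : α} (hp : p ∈ U) : p ∈ ordComp U p :=
  ⟨{p}, ⟨singleton_subset_iff.mpr hp, Set.ordConnected_singleton, rfl⟩, rfl⟩

omit [TopologicalSpace α] [OrderTopology α] in
lemma ordComp_ordConnected (U : Set α) (p : α) : (ordComp U p).OrdConnected :=
  ordConnected_sUnion_common fun V hV => ⟨hV.2.1, hV.2.2⟩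

lemma ordComp_isOpen {U : Set α} (hU : IsOpen U) (p : α) : IsOpen (ordComp U p) := by
  rw [isOpen_iff_forall_mem_open]
  rintro q ⟨V0, hV0, hqV0⟩
  obtain ⟨W, hWo, hWc, hqW, hWU⟩ := exists_ordConnected_open_nbhd hU (hV0.1 hqV0)
  refine ⟨W, fun w hw => ?_, hWo, hqW⟩
  exact ⟨W ∪ V0, ⟨union_subset hWU hV0.1,
    ordConnected_union_common hWc hV0.2.1 hqW hqV0, Or.inr hV0.2.2⟩, Or.inl hw⟩

omit [TopologicalSpace α] [OrderTopology α] in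
lemma ordComp_eq_of_mem {U : Set α} {p q r : α} (hp : p ∈ U) (hq : q ∈ U)
    (h1 : r ∈ ordComp U p) (h2 : r ∈ ordComp U q) : ordComp U p = ordComp U q := by
  have key : ∀ a b c : α, a ∈ U → b ∈ U → c ∈ ordComp U a → c ∈ ordComp U b →
      ordComp U a ⊆ ordComp U b := by
    rintro a b c ha hb ⟨V1, hV1, hcV1⟩ ⟨V2, hV2, hcV2⟩ s ⟨V3, hV3, hsV3⟩
    refine ⟨V1 ∪ V3 ∪ V2, ⟨union_subset (union_subset hV1.1 hV3.1) hV2.1, ?_,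
      Or.inr hV2.2.2⟩, Or.inl (Or.inr hsV3)⟩
    exact ordConnected_union_common (p := c)
      (ordConnected_union_common (p := a) hV1.2.1 hV3.2.1 hV1.2.2 hV3.2.2)
      hV2.2.1 (Or.inl hcV1) hcV2
  exact Subset.antisymm (key p q r hp hq h1 h2) (key q p r hq hp h2 h1)

/-- open sets are countable unions of closed sets, in a ccc LOTS -/
lemma isFsigma_of_open (hccc : CCC α) {U : Set α} (hU : IsOpen U) :
    ∃ T : Set (Set α), T.Countable ∧ (∀ t ∈ T, IsClosed t) ∧ U = ⋃₀ T := by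
  classical
  set 𝒞 : Set (Set α) := (fun p => ordComp U p) '' U with h𝒞
  have h𝒞count : 𝒞.Countable := by
    apply hccc
    · rintro C ⟨p, hp, rfl⟩
      exact ⟨ordComp_isOpen hU p, ⟨p, mem_ordComp_self hp⟩⟩
    · rintro C ⟨p, hp, rfl⟩ C' ⟨q, hq, rfl⟩ hne
      rw [Function.onFun, Set.disjoint_left]
      intro r hr hr'
      exact hne (ordComp_eq_of_mem hp hq hr hr')
  -- each component is a countable union of closed intervals
  have hcomp : ∀ C ∈ 𝒞, ∃ T : Set (Set α), T.Countable ∧ (∀ t ∈ T, IsClosed t) ∧ C = ⋃₀ T := by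
    rintro C ⟨p, hp, rfl⟩
    set C := ordComp U p
    obtain ⟨D, hDC, hDcnt, hDcof⟩ := hccc.exists_countable_cofinal C
    obtain ⟨E, hEC, hEcnt, hEcoi⟩ := hccc.exists_countable_coinitial C
    refine ⟨(fun ed : α × α => Icc ed.1 ed.2) '' (E ×ˢ D), (hEcnt.prod hDcnt).image _,
      ?_, ?_⟩
    · rintro t ⟨ed, -, rfl⟩
      exact isClosed_Icc
    · apply Subset.antisymm
      · intro x hx
        obtain ⟨d, hd, hxd⟩ := hDcof x hx
        obtain ⟨e, he, hex⟩ := hEcoi x hx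
        exact ⟨Icc e d, ⟨(e, d), ⟨he, hd⟩, rfl⟩, hex, hxd⟩
      · rintro x ⟨t, ⟨⟨e, d⟩, ⟨he, hd⟩, rfl⟩, hx⟩
        exact (ordComp_ordConnected U p).out (hEC he) (hDC hd) hx
  choose T hT1 hT2 hT3 using hcomp
  refine ⟨⋃ C : 𝒞, T C C.2, ?_, ?_, ?_⟩
  · have : Countable 𝒞 := h𝒞count.to_subtype
    exact countable_iUnion fun C => hT1 C C.2
  · rintro t ht
    rw [mem_iUnion] at ht
    obtain ⟨C, hC⟩ := ht
    exact hT2 C C.2 t hC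
  · apply Subset.antisymm
    · intro x hx
      have hx' : x ∈ ordComp U x := mem_ordComp_self hx
      have hC : ordComp U x ∈ 𝒞 := ⟨x, hx, rfl⟩
      rw [hT3 _ hC] at hx'
      obtain ⟨t, ht, hxt⟩ := hx'
      exact ⟨t, mem_iUnion.mpr ⟨⟨_, hC⟩, ht⟩, hxt⟩
    · rintro x ⟨t, ht, hxt⟩
      rw [mem_iUnion] at ht
      obtain ⟨⟨C, hC⟩, htC⟩ := ht
      have : x ∈ C := by
        rw [hT3 _ hC]
        exact ⟨t, htC, hxt⟩
      obtain ⟨q, hq, rfl⟩ := hC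
      exact ordComp_subset U q this

lemma isGδ_of_isClosed_of_ccc (hccc : CCC α) {B : Set α} (hB : IsClosed B) : IsGδ B := by
  obtain ⟨T, hTc, hTcl, hTU⟩ := isFsigma_of_open hccc hB.isOpen_compl
  have hBeq : B = ⋂₀ (compl '' T) := by
    rw [← compl_sUnion, ← hTU, compl_compl]
  rw [hBeq]
  exact IsGδ.sInter (by rintro s ⟨t, ht, rfl⟩; exact (hTcl t ht).isOpen_compl.isGδ)
    (hTc.image _)

end Cofinal

section PN
variable {α : Type u} [LinearOrder α] [TopologicalSpace α] [OrderTopology α] [CompactSpace α]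

lemma perfNormal_of_ccc (hccc : CCC α) : PerfNormal α :=
  ⟨inferInstance, fun _ hB => isGδ_of_isClosed_of_ccc hccc hB⟩

end PN

section Sub
variable {K : Type u} [LinearOrder K] [TopologicalSpace K] [OrderTopology K] [CompactSpace K]

lemma orderTopology_of_le_of_compact {β : Type u} [LinearOrder β] {t : TopologicalSpace β}
    (hcomp : @CompactSpace β t) (hle : t ≤ Preorder.topology β) : @OrderTopology β t _ := by
  have ht2ot : @OrderTopology β (Preorder.topology β) _ := @OrderTopology.mk β (Preorder.topology β) _ rfl
  have ht2' : @T2Space β (Preorder.topology β) :=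
    @OrderClosedTopology.to_t2Space β (Preorder.topology β) _
      (@OrderTopology.to_orderClosedTopology β (Preorder.topology β) _ ht2ot)
  have hcont : Continuous[t, Preorder.topology β] id := continuous_id_of_le hle
  have hclosedmap := @Continuous.isClosedMap β β t (Preorder.topology β) hcomp ht2' id hcont
  have hge : Preorder.topology β ≤ t := by
    intro s hs
    have h1 : @IsClosed β t sᶜ := (@isClosed_compl_iff β t s).mpr hs
    have h2 := hclosedmap _ h1
    rw [Set.image_id] at h2
    exact (@isClosed_compl_iff β (Preorder.topology β) s).mp h2
  exact @OrderTopology.mk β t _ (le_antisymm hle hge)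

lemma orderTopology_subtype_of_isClosed {A : Set K} (hA : IsClosed A) :
    OrderTopology ↥A := by
  apply orderTopology_of_le_of_compact (isCompact_iff_compactSpace.mp hA.isCompact)
  show instTopologicalSpaceSubtype ≤ TopologicalSpace.generateFrom _
  apply le_generateFrom
  rintro s ⟨a, rfl | rfl⟩
  · have h : {x : ↥A | a < x} = Subtype.val ⁻¹' Ioi ↑a := by ext x; exact Iff.rfl
    rw [show Ioi a = Subtype.val ⁻¹' Ioi ↑a from h]
    exact (continuous_subtype_val).isOpen_preimage _ isOpen_Ioi
  · have h : {x : ↥A | x < a} = Subtype.val ⁻¹' Iio ↑a := by ext x; exact Iff.rfl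
    rw [show Iio a = Subtype.val ⁻¹' Iio ↑a from h]
    exact (continuous_subtype_val).isOpen_preimage _ isOpen_Iio

end Sub

section CCCX
variable {X : Type u} [TopologicalSpace X]

/-- In a compact space in which closed sets are Gδ, every disjoint family of nonempty
open sets is countable. -/
lemma ccc_of_perfNormal_compact [CompactSpace X] (hGδ : ∀ A : Set X, IsClosed A → IsGδ A) :
    CCC X := by
  intro 𝒰 h1 h2
  set W := ⋃₀ 𝒰 with hWdef
  have hW : IsOpen W := isOpen_sUnion fun U hU => (h1 U hU).1
  obtain ⟨T, hTopen, hTcnt, hTeq⟩ := hGδ Wᶜ hW.isClosed_compl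
  have hWeq : W = ⋃ t : T, (↑t : Set X)ᶜ := by
    have : Wᶜ = ⋂₀ T := hTeq
    rw [← compl_compl W, this, sInter_eq_iInter, compl_iInter]
  -- for each t, the compact set tᶜ is covered by finitely many members of 𝒰
  have hcover : ∀ t : T, ∃ s : Finset 𝒰, ((↑t : Set X)ᶜ) ⊆ ⋃ U ∈ s, (U : Set X) := by
    intro t
    have hc : IsCompact ((↑t : Set X)ᶜ) :=
      ((hTopen _ t.2).isClosed_compl).isCompact
    apply hc.elim_finite_subcover (fun U : 𝒰 => (U : Set X))
      (fun U => (h1 _ U.2).1)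
    intro x hx
    have : x ∈ W := hWeq ▸ mem_iUnion.mpr ⟨t, hx⟩
    obtain ⟨U, hU, hxU⟩ := this
    exact mem_iUnion.mpr ⟨⟨U, hU⟩, hxU⟩
  choose s hs using hcover
  haveI : Countable T := hTcnt.to_subtype
  have hsub : 𝒰 ⊆ ⋃ t : T, (fun U : 𝒰 => (U : Set X)) '' ↑(s t) := by
    intro U hU
    obtain ⟨x, hx⟩ := (h1 U hU).2
    have hxW : x ∈ W := ⟨U, hU, hx⟩
    rw [hWeq] at hxW
    obtain ⟨t, hxt⟩ := mem_iUnion.mp hxW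
    obtain ⟨V, hVs, hxV⟩ := mem_iUnion₂.mp (hs t hxt)
    have hUV : U = ↑V := by
      by_contra hne
      have hd := h2 hU V.2 (fun h => hne (h ▸ rfl))
      exact Set.disjoint_left.mp hd hx hxV
    exact mem_iUnion.mpr ⟨t, ⟨V, hVs, hUV.symm⟩⟩
  exact (Set.Countable.mono hsub (countable_iUnion fun t => ((s t).finite_toSet.image _).countable))

end CCCX


theorem image_of_perfectlyNormal_compact_LOTS (X : Type u) [TopologicalSpace X]
    [T2Space X] (hpn : PerfNormal X) (hX : ContinuousImageOfCompactLOTS X) :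
    ∃ (K : Type u) (lo : LinearOrder K) (tK : TopologicalSpace K),
      letI := lo; letI := tK;
      OrderTopology K ∧ CompactSpace K ∧ PerfNormal K ∧
        ∃ f : K → X, Continuous f ∧ Function.Surjective f := by
  classical
  obtain ⟨K, lo, tK, hot, hcomp, f, hf, hfs⟩ := hX
  haveI := hot
  haveI := hcomp
  haveI : CompactSpace X := ⟨by rw [← hfs.range_eq]; exact isCompact_range hf⟩
  have hXccc : CCC X := ccc_of_perfNormal_compact hpn.2
  -- minimal closed subset mapping onto X
  set S : Set (Set K) := {A : Set K | IsClosed A ∧ f '' A = univ} with hS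
  have hzorn : ∃ m, m ⊆ univ ∧ Minimal (· ∈ S) m := by
    apply zorn_superset_nonempty
    · intro c hcS hchain hcne
      haveI : Nonempty c := hcne.to_subtype
      refine ⟨⋂₀ c, ⟨isClosed_sInter fun s hs => (hcS hs).1, ?_⟩,
        fun s hs => sInter_subset_of_mem hs⟩
      rw [eq_univ_iff_forall]
      intro x
      have hdir : Directed (· ⊇ ·) (fun A : c => (A : Set K) ∩ f ⁻¹' {x}) := by
        rintro A B
        rcases hchain.total A.2 B.2 with h | h
        · exact ⟨A, Subset.rfl, inter_subset_inter_left _ h⟩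
        · exact ⟨B, inter_subset_inter_left _ h, Subset.rfl⟩
      have hne : ∀ A : c, ((A : Set K) ∩ f ⁻¹' {x}).Nonempty := by
        intro A
        have := (hcS A.2).2
        have hx : x ∈ f '' (A : Set K) := this ▸ mem_univ x
        obtain ⟨k, hk, hfk⟩ := hx
        exact ⟨k, hk, by simpa using hfk⟩
      have hcl : ∀ A : c, IsClosed ((A : Set K) ∩ f ⁻¹' {x}) := fun A =>
        ((hcS A.2).1).inter (isClosed_singleton.preimage hf)
      obtain ⟨k, hk⟩ := IsCompact.nonempty_iInter_of_directed_nonempty_isCompact_isClosed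
        _ hdir hne (fun A => (hcl A).isCompact) hcl
      rw [mem_iInter] at hk
      refine ⟨k, ?_, ?_⟩
      · intro s hs
        exact (hk ⟨s, hs⟩).1
      · simpa using (hk (Classical.arbitrary c)).2
    · exact ⟨isClosed_univ, by rw [image_univ, hfs.range_eq]⟩
  obtain ⟨A, -, hAS, hAmin⟩ := hzorn
  have hAcl : IsClosed A := hAS.1
  have hAim : f '' A = univ := hAS.2
  -- the subtype as a LOTS
  haveI hcompA : CompactSpace ↥A := isCompact_iff_compactSpace.mp hAcl.isCompact
  have hotA : OrderTopology ↥A := orderTopology_subtype_of_isClosed hAcl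
  haveI := hotA
  set g : ↥A → X := fun a => f ↑a with hgdef
  have hgc : Continuous g := hf.comp continuous_subtype_val
  have hgs : Function.Surjective g := by
    intro x
    have hx : x ∈ f '' A := hAim ▸ mem_univ x
    obtain ⟨k, hk, hfk⟩ := hx
    exact ⟨⟨k, hk⟩, hfk⟩
  -- ccc of the subtype via irreducibility
  have hccc : CCC ↥A := by
    intro 𝒰 h1 h2
    set Φ : Set ↥A → Set X := fun U => (g '' Uᶜ)ᶜ with hΦ
    have hΦopen : ∀ U, IsOpen U → IsOpen (Φ U) :=
      fun U hU => (((hU.isClosed_compl).isCompact.image hgc).isClosed).isOpen_compl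
    have hΦne : ∀ U ∈ 𝒰, (Φ U).Nonempty := by
      intro U hU
      obtain ⟨p, hp⟩ := (h1 U hU).2
      have hprop : Subtype.val '' Uᶜ ∉ S := by
        intro hmem
        have hsub : Subtype.val '' Uᶜ ⊆ A := by
          rintro k ⟨a, -, rfl⟩; exact a.2
        have := hAmin hmem hsub
        have hpA : (p : K) ∈ Subtype.val '' Uᶜ := this p.2
        obtain ⟨q, hq, hqp⟩ := hpA
        rw [Subtype.val_injective hqp] at hq
        exact hq hp
      have : f '' (Subtype.val '' Uᶜ) ≠ univ := by
        intro heq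
        exact hprop ⟨((hAcl.isClosedEmbedding_subtypeVal).isClosedMap _
          (h1 U hU).1.isClosed_compl), heq⟩
      have himg : f '' (Subtype.val '' Uᶜ) = g '' Uᶜ := by
        rw [image_image]
      rw [himg] at this
      rcases (ne_univ_iff_exists_notMem _).mp this with ⟨x, hx⟩
      exact ⟨x, hx⟩
    have hΦdisj : ∀ U ∈ 𝒰, ∀ V ∈ 𝒰, U ≠ V → Disjoint (Φ U) (Φ V) := by
      intro U hU V hV hne
      rw [Set.disjoint_left]
      intro x hxU hxV
      obtain ⟨a, rfl⟩ := hgs x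
      have haU : a ∈ U := by
        by_contra h
        exact hxU ⟨a, h, rfl⟩
      have haV : a ∈ V := by
        by_contra h
        exact hxV ⟨a, h, rfl⟩
      exact Set.disjoint_left.mp (h2 hU hV hne) haU haV
    have hinj : Set.InjOn Φ 𝒰 := by
      intro U hU V hV heq
      by_contra hne
      have := hΦdisj U hU V hV hne
      rw [heq, disjoint_self] at this
      obtain ⟨x, hx⟩ := hΦne V hV
      rw [this] at hx
      exact hx
    have himgcnt : (Φ '' 𝒰).Countable := by
      apply hXccc
      · rintro W ⟨U, hU, rfl⟩
        exact ⟨hΦopen U (h1 U hU).1, hΦne U hU⟩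
      · rintro W1 ⟨U, hU, rfl⟩ W2 ⟨V, hV, rfl⟩ hne
        exact hΦdisj U hU V hV (fun h => hne (h ▸ rfl))
    exact countable_of_injective_of_countable_image hinj himgcnt
  have hpnA : PerfNormal ↥A := perfNormal_of_ccc hccc
  exact ⟨↥A, inferInstance, inferInstance, hotA, hcompA, hpnA, g, hgc, hgs⟩
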